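/- The two generating function representations of the same count agree: for all t ≥ 0, the coefficient of y^t x^1 / (t! 1!) in exp(e^{x+y} + (1/2)e^{2y} − 3/2) equals the coefficient of y^t / t! in exp(2e^y − 2 + y + (1/2)(e^y − 1)^2). -/
import Mathlib

/-- The two generating-function representations of the same count agree: for all `t`,
the coefficient of `y^t x^1 / (t! 1!)` in `exp(e^{x+y} + (1/2)e^{2y} - 3/2)` equals the
coefficient of `y^t / t!` in `exp(2e^y - 2 + y + (1/2)(e^y - 1)^2)`.  (Extracting EGF
coefficients via iterated differentiation at `0`.) -/
theorem bivariate_egf_at_u_one_eq_rotation_egf (t : ℕ) :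
    iteratedDeriv t (fun y : ℝ =>
        iteratedDeriv 1 (fun x : ℝ =>
          Real.exp (Real.exp (x + y) + (1 / 2) * Real.exp (2 * y) - 3 / 2)) 0) 0 =
      iteratedDeriv t (fun y : ℝ =>
        Real.exp (2 * Real.exp y - 2 + y + (1 / 2) * (Real.exp y - 1) ^ 2)) 0 := by
  congr 1
  funext y
  rw [iteratedDeriv_one]
  have h1 : HasDerivAt (fun x : ℝ => x + y) 1 0 := (hasDerivAt_id 0).add_const y
  have h2 := h1.exp
  have h3 := (h2.add_const ((1 / 2) * Real.exp (2 * y))).sub_const (3 / 2)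
  have h4 := h3.exp
  rw [h4.deriv, zero_add, mul_one, show (2:ℝ) * y = y + y by ring, Real.exp_add,
    ← Real.exp_add]
  congr 1
  ring
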